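/- For tuples A ∈ ℕ^a and B ∈ ℕ^b with |A| = |B|, the quantum multinomial [|A| choose B₁,…,B_b] can be expanded as a sum over matrices AB ∈ ℕ^{a×b} with column sums equal to B (i.e. Σ_α AB_{α,β} = B_β for each β) and row sums equal to A (only such terms contribute nonzero), of monomials q^{e(AB)} times the product over α = 1,…,a of [A_α choose AB_{α,1},…,AB_{α,b}], where e(AB) is an explicit quadratic form in the entries of AB; in particular, such an expansion with integer-coefficient monomial prefactors exists. -/

import Mathlib

open Finset

noncomputable def q : RatFunc ℚ := RatFunc.X

/-- `(q²;q²)_k = ∏_{i=1}^{k} (1 - q^{2i})`. -/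
noncomputable def qp (k : ℕ) : RatFunc ℚ := ∏ i ∈ Finset.range k, (1 - q ^ (2 * (i + 1)))

/-- The quantum multinomial coefficient `[|d| choose d₁,…,d_m]`. -/
noncomputable def qmul {m : ℕ} (d : Fin m → ℕ) : RatFunc ℚ :=
  qp (∑ i, d i) / ∏ i, qp (d i)

lemma q_ne_zero : q ≠ 0 := RatFunc.X_ne_zero

lemma one_sub_q_pow_ne_zero (m : ℕ) (hm : 0 < m) : (1 : RatFunc ℚ) - q ^ m ≠ 0 := by
  have : (1 : RatFunc ℚ) - q ^ m = algebraMap (Polynomial ℚ) (RatFunc ℚ) (1 - Polynomial.X ^ m) := by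
    simp [q, RatFunc.algebraMap_X, map_sub, map_pow]
  rw [this]
  apply RatFunc.algebraMap_ne_zero
  intro hcon
  have := congrArg (Polynomial.eval 0) hcon
  simp [Polynomial.eval_pow, zero_pow hm.ne'] at this

lemma qp_ne_zero (k : ℕ) : qp k ≠ 0 := by
  unfold qp
  exact Finset.prod_ne_zero_iff.2 fun i _ => one_sub_q_pow_ne_zero _ (by positivity)

lemma qp_zero : qp 0 = 1 := by simp [qp]

lemma qp_succ (k : ℕ) : qp (k + 1) = qp k * (1 - q ^ (2 * (k + 1))) := by
  simp [qp, Finset.prod_range_succ, mul_comm]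

/-- q-binomial in base q², with `ℤ` lower index (zero outside `0 ≤ k ≤ n`). -/
noncomputable def qb (n : ℕ) (k : ℤ) : RatFunc ℚ :=
  if 0 ≤ k ∧ k ≤ n then qp n / (qp k.toNat * qp (n - k.toNat)) else 0

lemma qb_zero (n : ℕ) : qb n 0 = 1 := by
  simp [qb, qp_zero, div_self (qp_ne_zero n)]

lemma qb_neg {n : ℕ} {k : ℤ} (h : k < 0) : qb n k = 0 := by
  simp [qb]; intro h'; omega

lemma qb_gt {n : ℕ} {k : ℤ} (h : (n : ℤ) < k) : qb n k = 0 := by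
  simp [qb]; intro h'; omega

lemma qb_coe (n c : ℕ) (h : c ≤ n) : qb n c = qp n / (qp c * qp (n - c)) := by
  simp [qb, Int.toNat_natCast, (by exact_mod_cast h : (c:ℤ) ≤ n)]

/-- Pascal recurrence. -/
lemma qb_pascal (n : ℕ) (k : ℤ) :
    qb (n + 1) k = qb n k + q ^ (2 * ((n : ℤ) + 1 - k)) * qb n (k - 1) := by
  rcases lt_trichotomy k 0 with hk | hk | hk
  · rw [qb_neg hk, qb_neg hk, qb_neg (by omega)]; ring
  · subst hk
    rw [qb_zero, qb_zero, qb_neg (by norm_num)]; ring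
  · rcases le_or_gt k n with hkn | hkn
    · -- 1 ≤ k ≤ n : k = c+1, n = c+1+d
      obtain ⟨c, hc⟩ : ∃ c : ℕ, k = (c : ℤ) + 1 := ⟨(k - 1).toNat, by omega⟩
      obtain ⟨d, hd⟩ : ∃ d : ℕ, n = c + 1 + d := ⟨n - (c+1), by omega⟩
      subst hc hd
      rw [show ((c:ℤ)+1 : ℤ) = ((c+1:ℕ) : ℤ) by push_cast; ring,
        show ((c+1:ℕ):ℤ)-1 = ((c:ℕ):ℤ) by push_cast; ring,
        qb_coe _ (c+1) (by omega), qb_coe _ (c+1) (by omega), qb_coe _ c (by omega)]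
      have h1 : c + 1 + d + 1 - (c + 1) = d + 1 := by omega
      have h2 : c + 1 + d - (c + 1) = d := by omega
      have h3 : c + 1 + d - c = d + 1 := by omega
      rw [h1, h2, h3]
      have hE : (2 : ℤ) * ((↑(c+1+d):ℤ) + 1 - ↑(c+1)) = ((2*(d+1) : ℕ) : ℤ) := by
        push_cast; ring
      rw [hE, zpow_natCast]
      rw [qp_succ (c+1+d), qp_succ c, qp_succ d]
      have hA := one_sub_q_pow_ne_zero (2*(c+1)) (by positivity)
      have hB := one_sub_q_pow_ne_zero (2*(d+1)) (by positivity)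
      have hC := one_sub_q_pow_ne_zero (2*(c+1+d+1)) (by positivity)
      have hc0 := qp_ne_zero c
      have hd0 := qp_ne_zero d
      field_simp
      ring_nf
    · rcases eq_or_lt_of_le (by omega : (n : ℤ) + 1 ≤ k) with hkn1 | hkn1
      · rw [← hkn1, show ((n:ℤ)+1) = ((n+1 : ℕ) : ℤ) by push_cast; ring,
          qb_coe (n+1) (n+1) (le_refl _), qb_gt (by push_cast; omega),
          show ((n+1:ℕ) : ℤ) - 1 = ((n:ℕ) : ℤ) by push_cast; ring,
          qb_coe n n (le_refl _)]
        rw [Nat.sub_self, Nat.sub_self, qp_zero]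
        have hE : (2 : ℤ) * (((n+1:ℕ):ℤ) - ↑(n+1)) = ((0 : ℕ) : ℤ) := by push_cast; ring
        rw [hE, zpow_natCast]
        simp [div_self (qp_ne_zero (n+1)), div_self (qp_ne_zero n)]
      · rw [qb_gt (by omega : ((n:ℕ):ℤ) < k), qb_gt (by omega : ((n+1:ℕ):ℤ) < k),
          qb_gt (by omega : ((n:ℕ):ℤ) < k - 1)]
        ring

lemma qb_vandermonde (m n : ℕ) (k : ℤ) :
    qb (m + n) k =
      ∑ j ∈ Finset.range (n + 1),
        q ^ (2 * ((j : ℤ) * ((m : ℤ) - k + j))) * qb m (k - j) * qb n j := by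
  induction n generalizing k with
  | zero => simp [qb_zero]
  | succ n ih =>
    have key : ∀ (x y z : ℤ) (X Y : RatFunc ℚ), x = y + z →
        q ^ x * X * Y = q ^ y * (q ^ z * X * Y) := by
      intro x y z X Y hxyz
      subst hxyz
      rw [zpow_add₀ q_ne_zero]
      ring
    have lhs : qb (m + (n + 1)) k
        = qb (m + n) k + q ^ (2 * ((m : ℤ) + n + 1 - k)) * qb (m + n) (k - 1) := by
      rw [show m + (n + 1) = (m + n) + 1 by ring, qb_pascal (m + n) k,
        show (2 * (((m + n : ℕ) : ℤ) + 1 - k)) = 2 * ((m : ℤ) + n + 1 - k) by push_cast; ring]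
    rw [lhs, ih k, ih (k - 1)]
    have hsplit : ∀ j ∈ Finset.range (n + 2),
        q ^ (2 * ((j : ℤ) * ((m : ℤ) - k + j))) * qb m (k - j) * qb (n + 1) j
          = q ^ (2 * ((j : ℤ) * ((m : ℤ) - k + j))) * qb m (k - j) * qb n j
            + q ^ (2 * ((j : ℤ) * ((m : ℤ) - k + j)) + 2 * ((n : ℤ) + 1 - j)) * qb m (k - j)
              * qb n ((j : ℤ) - 1) := by
      intro j _
      rw [qb_pascal n j, zpow_add₀ q_ne_zero]
      ring
    rw [Finset.sum_congr rfl hsplit, Finset.sum_add_distrib]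
    congr 1
    · symm
      rw [Finset.sum_range_succ,
        qb_gt (show ((n : ℕ) : ℤ) < ((n + 1 : ℕ) : ℤ) by exact_mod_cast Nat.lt_succ_self n)]
      simp
    · symm
      rw [Finset.sum_range_succ', Finset.mul_sum]
      have h0 : q ^ (2 * (((0 : ℕ) : ℤ) * ((m : ℤ) - k + ((0 : ℕ) : ℤ)))
            + 2 * ((n : ℤ) + 1 - ((0 : ℕ) : ℤ))) * qb m (k - ((0 : ℕ) : ℤ))
          * qb n (((0 : ℕ) : ℤ) - 1) = 0 := by
        rw [qb_neg (show (((0 : ℕ) : ℤ) - 1) < 0 by norm_num)]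
        ring
      rw [h0, add_zero]
      refine Finset.sum_congr rfl fun j _ => ?_
      push_cast
      rw [show k - ((j : ℤ) + 1) = k - 1 - j by ring,
        show ((j : ℤ) + 1 - 1) = (j : ℤ) by ring]
      exact key _ _ _ _ _ (by ring)

lemma qmul_nil (d : Fin 0 → ℕ) : qmul d = 1 := by
  simp [qmul, qp_zero]

lemma mem_piFinset_range {b : ℕ} (C : Fin b → ℕ) (r : Fin b → ℕ) :
    r ∈ Fintype.piFinset (fun j => Finset.range (C j + 1)) ↔ ∀ j, r j ≤ C j := by
  simp [Fintype.mem_piFinset, Nat.lt_succ_iff]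

lemma qmul_cons {b : ℕ} (c : ℕ) (d : Fin b → ℕ) :
    qmul (Fin.cons c d) = qb (c + ∑ i, d i) (c : ℤ) * qmul d := by
  have hs : ∑ i, Fin.cons c d i = c + ∑ i, d i := by
    rw [Fin.sum_univ_succ]; simp
  have hp : ∏ i, qp ((Fin.cons c d : Fin (b+1) → ℕ) i) = qp c * ∏ i, qp (d i) := by
    rw [Fin.prod_univ_succ]; simp
  rw [qmul, hs, hp, qb_coe _ c (Nat.le_add_right _ _), Nat.add_sub_cancel_left, qmul]
  have h1 := qp_ne_zero c
  have h2 := qp_ne_zero (∑ i, d i)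
  have h3 : (∏ i, qp (d i)) ≠ 0 := Finset.prod_ne_zero_iff.2 fun i _ => qp_ne_zero _
  field_simp

/-- Splitting a sum over bounded tuples with fixed total into head and tail. -/
lemma cons_split {b : ℕ} (C : Fin (b + 1) → ℕ) (k : ℕ) (f : (Fin (b + 1) → ℕ) → RatFunc ℚ) :
    ∑ r ∈ (Fintype.piFinset fun j => Finset.range (C j + 1)).filter
        (fun r => ∑ j, r j = k), f r
      = ∑ r0 ∈ Finset.range (C 0 + 1),
          ∑ r' ∈ (Fintype.piFinset fun j : Fin b => Finset.range (Fin.tail C j + 1)).filter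
            (fun r' => r0 + ∑ j, r' j = k), f (Fin.cons r0 r') := by
  rw [Finset.sum_sigma']
  refine Finset.sum_nbij' (i := fun r => ⟨r 0, Fin.tail r⟩) (j := fun p => Fin.cons p.1 p.2)
    ?_ ?_ ?_ ?_ ?_
  · intro r hr
    rw [Finset.mem_filter, mem_piFinset_range] at hr
    obtain ⟨hb, hs⟩ := hr
    refine Finset.mem_sigma.2 ⟨Finset.mem_range.2 (Nat.lt_succ_of_le (hb 0)), ?_⟩
    rw [Finset.mem_filter, mem_piFinset_range]
    refine ⟨fun j => hb j.succ, ?_⟩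
    rw [← hs, Fin.sum_univ_succ]
    rfl
  · intro p hp
    rw [Finset.mem_sigma, Finset.mem_range, Finset.mem_filter, mem_piFinset_range] at hp
    obtain ⟨h0, hb, hs⟩ := hp
    rw [Finset.mem_filter, mem_piFinset_range]
    constructor
    · intro j
      refine Fin.cases ?_ ?_ j
      · simpa using Nat.lt_succ_iff.1 h0
      · intro i; simpa [Fin.tail] using hb i
    · rw [Fin.sum_univ_succ]
      simpa using hs
  · intro r _; exact Fin.cons_self_tail r
  · intro p _; exact Sigma.ext (by simp) (by simp)
  · intro r _; rw [Fin.cons_self_tail]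

lemma qb_vandermonde' (k l B0 : ℕ) :
    qb (k + l) (B0 : ℤ) = ∑ r0 ∈ Finset.range (B0 + 1),
      q ^ (2 * (((B0 - r0 : ℕ) : ℤ) * ((k : ℤ) - (B0 : ℤ) + ((B0 - r0 : ℕ) : ℤ))))
        * qb k (r0 : ℤ) * qb l ((B0 - r0 : ℕ) : ℤ) := by
  set F : ℕ → RatFunc ℚ := fun j =>
    q ^ (2 * ((j : ℤ) * ((k : ℤ) - (B0 : ℤ) + (j : ℤ)))) * qb k ((B0 : ℤ) - j) * qb l (j : ℤ)
    with hF
  have hF0 : ∀ j, l < j → F j = 0 := by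
    intro j hj
    rw [hF]
    beta_reduce
    rw [qb_gt (show (l : ℤ) < (j : ℤ) by exact_mod_cast hj)]
    ring
  have hF1 : ∀ j, B0 < j → F j = 0 := by
    intro j hj
    rw [hF]
    beta_reduce
    rw [qb_neg (show (B0 : ℤ) - (j : ℤ) < 0 by omega)]
    ring
  have h2 : ∀ N M : ℕ, (∀ j, M < j → F j = 0) → M ≤ N →
      ∑ j ∈ Finset.range (N + 1), F j = ∑ j ∈ Finset.range (M + 1), F j := by
    intro N M hz hMN
    symm
    apply Finset.sum_subset
    · intro x hx
      rw [Finset.mem_range] at *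
      omega
    · intro x hx hnx
      rw [Finset.mem_range] at hx hnx
      exact hz x (by omega)
  have key : qb (k + l) (B0 : ℤ) = ∑ j ∈ Finset.range (l + 1), F j := qb_vandermonde k l B0
  have main : ∀ _ : 0 = 0, ∑ j ∈ Finset.range (B0 + 1), F j
      = ∑ r0 ∈ Finset.range (B0 + 1),
        q ^ (2 * (((B0 - r0 : ℕ) : ℤ) * ((k : ℤ) - (B0 : ℤ) + ((B0 - r0 : ℕ) : ℤ))))
          * qb k (r0 : ℤ) * qb l ((B0 - r0 : ℕ) : ℤ) := by
    intro _
    rw [← Finset.sum_range_reflect]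
    refine Finset.sum_congr rfl fun r0 hr0 => ?_
    rw [Finset.mem_range] at hr0
    rw [show B0 + 1 - 1 - r0 = B0 - r0 by omega, hF]
    beta_reduce
    rw [show (B0 : ℤ) - ((B0 - r0 : ℕ) : ℤ) = (r0 : ℤ) by omega]
  rw [key]
  rcases le_total l B0 with h | h
  · rw [← h2 B0 l hF0 h]
    exact main rfl
  · rw [h2 l B0 hF1 h]
    exact main rfl

lemma L2 {b : ℕ} (B : Fin b → ℕ) (k l : ℕ) (hkl : k + l = ∑ j, B j) :
    ∃ E : (Fin b → ℕ) → ℤ,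
      qmul B = ∑ r ∈ (Fintype.piFinset fun j => Finset.range (B j + 1)).filter
          (fun r => ∑ j, r j = k),
        q ^ (E r) * qmul r * qmul (fun j => B j - r j) := by
  induction b generalizing k l with
  | zero =>
    refine ⟨fun _ => 0, ?_⟩
    have hk : k = 0 := (by simpa using hkl : k = 0 ∧ l = 0).1
    have hset : (Fintype.piFinset fun j : Fin 0 => Finset.range (B j + 1)).filter
        (fun r => ∑ j, r j = k) = {fun _ => 0} := by
      apply Finset.eq_singleton_iff_unique_mem.mpr
      constructor
      · rw [Finset.mem_filter]
        constructor
        · exact Fintype.mem_piFinset.2 fun j => j.elim0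
        · simp [hk]
      · intro r _
        funext j
        exact j.elim0
    rw [hset, Finset.sum_singleton, qmul_nil B, qmul_nil, qmul_nil]
    simp
  | succ b ih =>
    have hsum : ∑ j, B j = B 0 + ∑ j, Fin.tail B j := by
      rw [Fin.sum_univ_succ]; rfl
    have ihs : ∀ r0 : ℕ, ∃ E' : (Fin b → ℕ) → ℤ, r0 ≤ k → B 0 - r0 ≤ l → r0 ≤ B 0 →
        qmul (Fin.tail B) = ∑ r' ∈ (Fintype.piFinset fun j =>
            Finset.range (Fin.tail B j + 1)).filter (fun r' => ∑ j, r' j = k - r0),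
          q ^ (E' r') * qmul r' * qmul (fun j => Fin.tail B j - r' j) := by
      intro r0
      by_cases hc : r0 ≤ k ∧ B 0 - r0 ≤ l ∧ r0 ≤ B 0
      · obtain ⟨hc1, hc2, hc3⟩ := hc
        obtain ⟨E', hE'⟩ := ih (Fin.tail B) (k - r0) (l - (B 0 - r0)) (by omega)
        exact ⟨E', fun _ _ _ => hE'⟩
      · exact ⟨0, fun h1 h2 h3 => absurd ⟨h1, h2, h3⟩ hc⟩
    choose E' hE' using ihs
    refine ⟨fun r => 2 * (((B 0 - r 0 : ℕ) : ℤ) * ((k : ℤ) - (B 0 : ℤ) + ((B 0 - r 0 : ℕ) : ℤ)))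
      + E' (r 0) (Fin.tail r), ?_⟩
    rw [cons_split]
    have h1 : qmul B = qb (k + l) ((B 0 : ℤ)) * qmul (Fin.tail B) := by
      conv_lhs => rw [← Fin.cons_self_tail B]
      rw [qmul_cons, show B 0 + ∑ i, Fin.tail B i = k + l by omega]
    rw [h1, qb_vandermonde' k l (B 0), Finset.sum_mul]
    refine Finset.sum_congr rfl fun r0 hr0 => ?_
    rw [Finset.mem_range] at hr0
    have hr0' : r0 ≤ B 0 := by omega
    by_cases hk1 : r0 ≤ k
    · by_cases hk2 : B 0 - r0 ≤ l
      · rw [hE' r0 hk1 hk2 hr0']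
        have hfil : (Fintype.piFinset fun j =>
              Finset.range (Fin.tail B j + 1)).filter (fun r' => ∑ j, r' j = k - r0)
            = (Fintype.piFinset fun j =>
              Finset.range (Fin.tail B j + 1)).filter (fun r' => r0 + ∑ j, r' j = k) := by
          apply Finset.filter_congr
          intro r' _
          constructor <;> intro hh <;> omega
        rw [hfil, Finset.mul_sum]
        refine Finset.sum_congr rfl fun r' hr' => ?_
        rw [Finset.mem_filter, mem_piFinset_range] at hr'
        obtain ⟨hb', hs'⟩ := hr'
        have h5 : qmul (Fin.cons r0 r') = qb k (r0 : ℤ) * qmul r' := by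
          rw [qmul_cons, hs']
        have h6 : (fun j => B j - (Fin.cons r0 r' : Fin (b + 1) → ℕ) j)
            = Fin.cons (B 0 - r0) (fun j => Fin.tail B j - r' j) := by
          funext j
          refine Fin.cases ?_ ?_ j
          · simp
          · intro i
            simp [Fin.tail]
        have h8 : ∑ j, (Fin.tail B j - r' j) + ∑ j, r' j = ∑ j, Fin.tail B j := by
          rw [← Finset.sum_add_distrib]
          exact Finset.sum_congr rfl fun j _ => Nat.sub_add_cancel (hb' j)
        have h7 : qmul (fun j => B j - (Fin.cons r0 r' : Fin (b + 1) → ℕ) j)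
            = qb l ((B 0 - r0 : ℕ) : ℤ) * qmul (fun j => Fin.tail B j - r' j) := by
          rw [h6, qmul_cons]
          have hbeta : ∑ i, (fun j => Fin.tail B j - r' j) i = ∑ j, (Fin.tail B j - r' j) := rfl
          rw [hbeta, show (B 0 - r0) + ∑ j, (Fin.tail B j - r' j) = l by omega]
        simp only [Fin.cons_zero, Fin.tail_cons]
        rw [h5, h7, zpow_add₀ q_ne_zero]
        ring
      · have hempty : (Fintype.piFinset fun j =>
              Finset.range (Fin.tail B j + 1)).filter (fun r' => r0 + ∑ j, r' j = k) = ∅ := by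
          rw [Finset.filter_eq_empty_iff]
          intro r' hr'
          rw [mem_piFinset_range] at hr'
          have hle : ∑ j, r' j ≤ ∑ j, Fin.tail B j :=
            Finset.sum_le_sum fun j _ => hr' j
          omega
        rw [hempty, Finset.sum_empty,
          qb_gt (show (l : ℤ) < ((B 0 - r0 : ℕ) : ℤ) by omega)]
        ring
    · have hempty : (Fintype.piFinset fun j =>
            Finset.range (Fin.tail B j + 1)).filter (fun r' => r0 + ∑ j, r' j = k) = ∅ := by
        rw [Finset.filter_eq_empty_iff]
        intro r' _
        omega
      rw [hempty, Finset.sum_empty, qb_gt (show (k : ℤ) < (r0 : ℤ) by omega)]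
      ring

lemma mat_split {a b : ℕ} (A : Fin (a + 1) → ℕ) (B : Fin b → ℕ) (h : ∑ i, A i = ∑ j, B j)
    (f : (Fin (a + 1) → Fin b → ℕ) → RatFunc ℚ) :
    ∑ M ∈ (Fintype.piFinset fun _ : Fin (a + 1) =>
        Fintype.piFinset fun _ : Fin b => Finset.range ((∑ i, A i) + 1)).filter
        (fun M => (∀ i, ∑ j, M i j = A i) ∧ ∀ j, ∑ i, M i j = B j), f M
    = ∑ r ∈ (Fintype.piFinset fun j => Finset.range (B j + 1)).filter
        (fun r => ∑ j, r j = A 0),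
      ∑ M' ∈ (Fintype.piFinset fun _ : Fin a =>
          Fintype.piFinset fun _ : Fin b => Finset.range ((∑ i, Fin.tail A i) + 1)).filter
          (fun M' => (∀ i, ∑ j, M' i j = Fin.tail A i) ∧ ∀ j, ∑ i, M' i j = B j - r j),
        f (Fin.cons r M') := by
  rw [Finset.sum_sigma']
  refine Finset.sum_nbij' (i := fun M => ⟨M 0, Fin.tail M⟩)
    (j := fun p => Fin.cons p.1 p.2) ?_ ?_ ?_ ?_ ?_
  · intro M hM
    rw [Finset.mem_filter] at hM
    obtain ⟨hMm, hrow, hcol⟩ := hM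
    have hent : ∀ i j, M i j ≤ ∑ i, A i := by
      intro i j
      have := Fintype.mem_piFinset.1 (Fintype.mem_piFinset.1 hMm i) j
      rw [Finset.mem_range] at this
      omega
    refine Finset.mem_sigma.2 ⟨?_, ?_⟩
    · rw [Finset.mem_filter, mem_piFinset_range]
      constructor
      · intro j
        rw [← hcol j]
        exact Finset.single_le_sum (f := fun i => M i j) (fun i _ => Nat.zero_le _)
          (Finset.mem_univ 0)
      · exact hrow 0
    · rw [Finset.mem_filter]
      refine ⟨?_, ?_, ?_⟩
      · rw [Fintype.mem_piFinset]
        intro i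
        rw [Fintype.mem_piFinset]
        intro j
        rw [Finset.mem_range, Nat.lt_succ_iff]
        calc Fin.tail M i j ≤ ∑ j', Fin.tail M i j' :=
              Finset.single_le_sum (fun _ _ => Nat.zero_le _) (Finset.mem_univ j)
          _ = Fin.tail A i := hrow i.succ
          _ ≤ ∑ i', Fin.tail A i' :=
              Finset.single_le_sum (fun _ _ => Nat.zero_le _) (Finset.mem_univ i)
      · intro i
        exact hrow i.succ
      · intro j
        have hcj := hcol j
        rw [Fin.sum_univ_succ] at hcj
        have hcj' : M 0 j + ∑ i, Fin.tail M i j = B j := hcj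
        dsimp only
        omega
  · intro p hp
    obtain ⟨r, M'⟩ := p
    dsimp only at hp ⊢
    rw [Finset.mem_sigma, Finset.mem_filter, Finset.mem_filter, mem_piFinset_range] at hp
    dsimp only at hp
    obtain ⟨⟨hrb, hrs⟩, hM'm, hrow', hcol'⟩ := hp
    have hent' : ∀ i j, M' i j ≤ ∑ i, Fin.tail A i := by
      intro i j
      have := Fintype.mem_piFinset.1 (Fintype.mem_piFinset.1 hM'm i) j
      rw [Finset.mem_range] at this
      omega
    have hs : ∑ i, A i = A 0 + ∑ i, Fin.tail A i := by
      rw [Fin.sum_univ_succ]; rfl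
    rw [Finset.mem_filter]
    refine ⟨?_, ?_, ?_⟩
    · rw [Fintype.mem_piFinset]
      intro i
      rw [Fintype.mem_piFinset]
      intro j
      rw [Finset.mem_range, Nat.lt_succ_iff]
      refine Fin.cases ?_ ?_ i
      · have hBle : B j ≤ ∑ j', B j' :=
          Finset.single_le_sum (fun _ _ => Nat.zero_le _) (Finset.mem_univ j)
        simp only [Fin.cons_zero]
        have := hrb j
        omega
      · intro i'
        simp only [Fin.cons_succ]
        have := hent' i' j
        omega
    · intro i
      refine Fin.cases ?_ ?_ i
      · simp only [Fin.cons_zero]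
        exact hrs
      · intro i'
        simp only [Fin.cons_succ]
        exact hrow' i'
    · intro j
      rw [Fin.sum_univ_succ]
      simp only [Fin.cons_zero, Fin.cons_succ]
      have h1 := hcol' j
      have h2 := hrb j
      omega
  · intro M _
    exact Fin.cons_self_tail M
  · intro p _
    exact Sigma.ext (by simp) (by simp)
  · intro M _
    rw [Fin.cons_self_tail]

/-- KRSS Lemma 4.6: for tuples `A ∈ ℕ^a`, `B ∈ ℕ^b` with `|A| = |B|`, the quantum multinomial
`[|A| choose B]` expands as a sum over matrices `AB ∈ ℕ^{a×b}` with row sums `A` and column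
sums `B` of monomials `q^{e(AB)}` (with integer exponents) times `∏_α [A_α choose AB_{α,*}]`. -/
theorem quantum_multinomial_refinement {a b : ℕ} (A : Fin a → ℕ) (B : Fin b → ℕ)
    (h : ∑ i, A i = ∑ j, B j) :
    ∃ e : (Fin a → Fin b → ℕ) → ℤ,
      qmul B =
        ∑ M ∈ (Fintype.piFinset fun _ : Fin a =>
            Fintype.piFinset fun _ : Fin b => Finset.range ((∑ i, A i) + 1)).filter
            (fun M => (∀ i, ∑ j, M i j = A i) ∧ ∀ j, ∑ i, M i j = B j),
          q ^ (e M) * ∏ i, qmul (M i) := by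
  induction a generalizing B with
  | zero =>
    refine ⟨fun _ => 0, ?_⟩
    have hB0 : ∑ j, B j = 0 := by
      rw [← h]
      simp
    have hB : ∀ j, B j = 0 := by
      intro j
      have := Finset.sum_eq_zero_iff.1 hB0 j (Finset.mem_univ j)
      exact this
    have hq : qmul B = 1 := by
      rw [qmul, hB0, qp_zero,
        show ∏ j, qp (B j) = 1 from Finset.prod_eq_one fun j _ => by rw [hB j, qp_zero]]
      norm_num
    have hset : (Fintype.piFinset fun _ : Fin 0 =>
        Fintype.piFinset fun _ : Fin b => Finset.range ((∑ i, A i) + 1)).filter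
        (fun M => (∀ i, ∑ j, M i j = A i) ∧ ∀ j, ∑ i, M i j = B j)
          = {fun i => Fin.elim0 i} := by
      apply Finset.eq_singleton_iff_unique_mem.mpr
      constructor
      · rw [Finset.mem_filter]
        refine ⟨Fintype.mem_piFinset.2 fun i => i.elim0, fun i => i.elim0, fun j => ?_⟩
        simp [hB j]
      · intro M _
        funext i
        exact i.elim0
    rw [hq, hset, Finset.sum_singleton]
    simp
  | succ a ih =>
    have hs : ∑ i, A i = A 0 + ∑ i, Fin.tail A i := by
      rw [Fin.sum_univ_succ]; rfl
    obtain ⟨E, hE⟩ := L2 B (A 0) (∑ j, B j - A 0) (by omega)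
    have ihs : ∀ r : Fin b → ℕ, ∃ e' : (Fin a → Fin b → ℕ) → ℤ,
        (∀ j, r j ≤ B j) → ∑ j, r j = A 0 →
        qmul (fun j => B j - r j) = ∑ M' ∈ (Fintype.piFinset fun _ : Fin a =>
            Fintype.piFinset fun _ : Fin b => Finset.range ((∑ i, Fin.tail A i) + 1)).filter
            (fun M' => (∀ i, ∑ j, M' i j = Fin.tail A i) ∧ ∀ j, ∑ i, M' i j = B j - r j),
          q ^ (e' M') * ∏ i, qmul (M' i) := by
      intro r
      by_cases hc : (∀ j, r j ≤ B j) ∧ ∑ j, r j = A 0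
      · obtain ⟨hc1, hc2⟩ := hc
        have hsub : ∑ i, Fin.tail A i = ∑ j, (B j - r j) := by
          have hx : ∑ j, (B j - r j) + ∑ j, r j = ∑ j, B j := by
            rw [← Finset.sum_add_distrib]
            exact Finset.sum_congr rfl fun j _ => Nat.sub_add_cancel (hc1 j)
          omega
        obtain ⟨e', he'⟩ := ih (Fin.tail A) (fun j => B j - r j) hsub
        exact ⟨e', fun _ _ => he'⟩
      · exact ⟨0, fun h1 h2 => absurd ⟨h1, h2⟩ hc⟩
    choose e' he' using ihs
    refine ⟨fun M => E (M 0) + e' (M 0) (Fin.tail M), ?_⟩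
    rw [mat_split A B h, hE]
    refine Finset.sum_congr rfl fun r hr => ?_
    rw [Finset.mem_filter, mem_piFinset_range] at hr
    obtain ⟨hr1, hr2⟩ := hr
    rw [he' r hr1 hr2, Finset.mul_sum]
    refine Finset.sum_congr rfl fun M' hM' => ?_
    simp only [Fin.cons_zero, Fin.tail_cons]
    rw [Fin.prod_univ_succ]
    simp only [Fin.cons_zero, Fin.cons_succ]
    rw [zpow_add₀ q_ne_zero]
    ring
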